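/- arXiv:2506.21309 — 6 statements merged into one kernel-verified Lean document; each statement's English description precedes it below -/
import Mathlib

section
/- Let q ≥ 2 be an integer, let 1 ≤ t ≤ q and 1 ≤ t' ≤ q, and let 1 ≤ α₁ ≤ ... ≤ α_t and 1 ≤ β₁ ≤ ... ≤ β_{t'} be integers such that Σᵢ(q^{αᵢ} − 1) = Σᵢ(q^{βᵢ} − 1). Then t = t' and αᵢ = βᵢ for all i. -/
lemma aux_not_lt (q t : ℕ) (hq : 2 ≤ q) (ht : t + 1 ≤ q) (a b : Fin (t+1) → ℕ)
    (hb : ∀ i, 1 ≤ b i) (hma : Monotone a)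
    (hsum : ∑ i, q ^ a i = ∑ i, q ^ b i) :
    ¬ a (Fin.last t) < b (Fin.last t) := by
  intro hlt
  have hq1 : 1 ≤ q := by omega
  have hA : ∑ i, q ^ a i ≤ (t+1) * q ^ a (Fin.last t) := by
    calc ∑ i, q ^ a i ≤ ∑ _i : Fin (t+1), q ^ a (Fin.last t) :=
          Finset.sum_le_sum (fun i _ => Nat.pow_le_pow_right hq1 (hma (Fin.le_last i)))
      _ = (t+1) * q ^ a (Fin.last t) := by
          simp [Finset.sum_const, Finset.card_univ]
  have hA2 : (t+1) * q ^ a (Fin.last t) ≤ q ^ (a (Fin.last t) + 1) := by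
    rw [pow_succ, mul_comm]
    exact Nat.mul_le_mul_left _ ht
  have hA3 : q ^ (a (Fin.last t) + 1) ≤ q ^ (b (Fin.last t)) :=
    Nat.pow_le_pow_right hq1 (by omega)
  have hB : q ^ b (Fin.last t) + t * q ≤ ∑ i, q ^ b i := by
    rw [Fin.sum_univ_castSucc]
    have h1 : t * q ≤ ∑ i : Fin t, q ^ b (i.castSucc) := by
      calc t * q = ∑ _i : Fin t, q := by simp [Finset.sum_const, Finset.card_univ, mul_comm]
        _ ≤ ∑ i : Fin t, q ^ b (i.castSucc) := by
            refine Finset.sum_le_sum fun i _ => ?_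
            calc q = q ^ 1 := (pow_one q).symm
              _ ≤ q ^ b (i.castSucc) := Nat.pow_le_pow_right hq1 (hb _)
    omega
  have ht0 : t = 0 := by
    have := hsum ▸ hA
    nlinarith
  subst ht0
  have hlt' : q ^ a (Fin.last 0) < q ^ b (Fin.last 0) :=
    Nat.pow_lt_pow_right (by omega) hlt
  have : (∑ i, q ^ a i) = q ^ a (Fin.last 0) := by
    simp [Fin.sum_univ_one]
  have hb' : (∑ i, q ^ b i) = q ^ b (Fin.last 0) := by
    simp [Fin.sum_univ_one]
  omega

lemma pow_sum_inj (q : ℕ) (hq : 2 ≤ q) :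
    ∀ t, t ≤ q → ∀ a b : Fin t → ℕ, (∀ i, 1 ≤ a i) → (∀ i, 1 ≤ b i) →
      Monotone a → Monotone b → ∑ i, q ^ a i = ∑ i, q ^ b i → a = b := by
  intro t
  induction t with
  | zero => intro _ a b _ _ _ _ _; funext i; exact i.elim0
  | succ t ih =>
    intro htq a b ha hb hma hmb hsum
    have hlast : a (Fin.last t) = b (Fin.last t) :=
      le_antisymm (not_lt.1 (aux_not_lt q t hq htq b a ha hmb hsum.symm))
        (not_lt.1 (aux_not_lt q t hq htq a b hb hma hsum))
    have hsum' : ∑ i : Fin t, q ^ a (i.castSucc) = ∑ i : Fin t, q ^ b (i.castSucc) := by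
      rw [Fin.sum_univ_castSucc, Fin.sum_univ_castSucc, hlast] at hsum
      omega
    have hres : (fun i : Fin t => a i.castSucc) = (fun i : Fin t => b i.castSucc) :=
      ih (by omega) _ _ (fun i => ha _) (fun i => hb _)
        (fun i j h => hma (by simpa using h)) (fun i j h => hmb (by simpa using h)) hsum'
    funext i
    refine Fin.lastCases hlast (fun j => ?_) i
    exact congrFun hres j

/-- If `q ≥ 2`, `1 ≤ t, t' ≤ q`, and nondecreasing tuples of positive integers `α`, `β`
satisfy `Σ (q^αᵢ - 1) = Σ (q^βᵢ - 1)`, then the tuples coincide. -/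
theorem eigencount_sum_injective (q t t' : ℕ) (hq : 2 ≤ q)
    (ht : 1 ≤ t) (ht' : t ≤ q) (ht1 : 1 ≤ t') (ht1' : t' ≤ q)
    (α : Fin t → ℕ) (β : Fin t' → ℕ)
    (hα1 : ∀ i, 1 ≤ α i) (hβ1 : ∀ i, 1 ≤ β i)
    (hαmono : Monotone α) (hβmono : Monotone β)
    (hsum : ∑ i, (q ^ α i - 1) = ∑ i, (q ^ β i - 1)) :
    ∃ h : t = t', ∀ i : Fin t, α i = β (Fin.cast h i) := by
  have hpow : ∀ n : ℕ, 1 ≤ n → q ^ n = (q ^ n - 1) + 1 := fun n hn => by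
    have : 1 ≤ q ^ n := Nat.one_le_pow _ _ (by omega)
    omega
  have hα : ∑ i, q ^ α i = (∑ i, (q ^ α i - 1)) + t := by
    calc ∑ i, q ^ α i = ∑ i, ((q ^ α i - 1) + 1) :=
          Finset.sum_congr rfl (fun i _ => hpow _ (hα1 i))
      _ = (∑ i, (q ^ α i - 1)) + t := by rw [Finset.sum_add_distrib]; simp
  have hβ : ∑ i, q ^ β i = (∑ i, (q ^ β i - 1)) + t' := by
    calc ∑ i, q ^ β i = ∑ i, ((q ^ β i - 1) + 1) :=
          Finset.sum_congr rfl (fun i _ => hpow _ (hβ1 i))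
      _ = (∑ i, (q ^ β i - 1)) + t' := by rw [Finset.sum_add_distrib]; simp
  obtain ⟨m, hm⟩ : q ∣ ∑ i, q ^ α i :=
    Finset.dvd_sum fun i _ => dvd_pow_self q (by have := hα1 i; omega)
  obtain ⟨n, hn⟩ : q ∣ ∑ i, q ^ β i :=
    Finset.dvd_sum fun i _ => dvd_pow_self q (by have := hβ1 i; omega)
  have hkey : q * m + t' = q * n + t := by omega
  have hmn : m = n := by
    rcases lt_trichotomy m n with h | h | h
    · have : q * (m + 1) ≤ q * n := Nat.mul_le_mul_left q h
      rw [Nat.mul_add, Nat.mul_one] at this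
      omega
    · exact h
    · have : q * (n + 1) ≤ q * m := Nat.mul_le_mul_left q h
      rw [Nat.mul_add, Nat.mul_one] at this
      omega
  subst hmn
  have htt : t = t' := by omega
  subst htt
  have hsum' : ∑ i, q ^ α i = ∑ i, q ^ β i := by omega
  have heq : α = β := pow_sum_inj q hq t ht' α β hα1 hβ1 hαmono hβmono hsum'
  exact ⟨rfl, fun i => congrFun heq i⟩
end

section
/- If M is a diagonalizable (n+1)×(n+1) matrix over F_q with t > 2 distinct eigenvalues whose eigenspaces have dimensions g₁ ≥ g₂ ≥ … ≥ g_t, then there exists a diagonalizable matrix M' with exactly t−1 distinct eigenvalues whose eigenspace dimensions are g₁+g₂, g₃, …, g_t, and M' has strictly more eigenvectors than M; equivalently, (q^{g₁+g₂} − 1) + Σ_{i≥3}(q^{gᵢ} − 1) > Σ_{i≥1}(q^{gᵢ} − 1). -/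
open Matrix DirectSum





section AuxEigen
variable {F : Type*} [Field F] [Fintype F]

omit [Fintype F] in
lemma aux_sum_finrank_le {V : Type*} [AddCommGroup V] [Module F V] [FiniteDimensional F V]
    {ι : Type*} [Fintype ι] [DecidableEq ι] (p : ι → Submodule F V) (h : iSupIndep p) :
    ∑ i, Module.finrank F (p i) ≤ Module.finrank F V := by
  have hinj := h.dfinsupp_lsum_injective
  have h1 : Module.finrank F (⨁ i, ↥(p i)) ≤ Module.finrank F V :=
    LinearMap.finrank_le_finrank_of_injective hinj
  rwa [Module.finrank_directSum] at h1

omit [Fintype F] in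
lemma aux_eigenspace_eq_bot {m : ℕ} (w : Fin m → F) (c : F) (hc : ∀ j, w j ≠ c) :
    Module.End.eigenspace (Matrix.mulVecLin (Matrix.diagonal w)ᵀ) c = ⊥ := by
  rw [eq_bot_iff]
  intro ξ hξ
  rw [Module.End.mem_eigenspace_iff] at hξ
  simp only [Matrix.diagonal_transpose, Matrix.mulVecLin_apply] at hξ
  have : ∀ j, w j * ξ j = c * ξ j := fun j => by
    have := congrFun hξ j
    simpa [Matrix.mulVec_diagonal] using this
  simp only [Submodule.mem_bot]
  funext j
  have h2 := this j
  rcases mul_eq_mul_right_iff.mp h2 with h | h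
  · exact absurd h (hc j)
  · exact h

omit [Fintype F] in
lemma aux_finrank_eigenspace_diagonal {m : ℕ} (w : Fin m → F) (c : F) :
    Module.finrank F (Module.End.eigenspace (Matrix.mulVecLin (Matrix.diagonal w)ᵀ) c) =
      Nat.card {j // w j = c} := by
  classical
  set φ : ({j // w j = c} → F) →ₗ[F] (Fin m → F) :=
    { toFun := fun x j => if h : w j = c then x ⟨j, h⟩ else 0
      map_add' := by intro x y; funext j; by_cases h : w j = c <;> simp [h]
      map_smul' := by intro a x; funext j; by_cases h : w j = c <;> simp [h] }
  have hφinj : Function.Injective φ := by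
    rw [← LinearMap.ker_eq_bot, eq_bot_iff]
    intro x hx
    simp only [LinearMap.mem_ker] at hx
    simp only [Submodule.mem_bot]
    funext ⟨j, hj⟩
    have := congrFun hx j
    simpa [φ, hj] using this
  have hrange : LinearMap.range φ =
      Module.End.eigenspace (Matrix.mulVecLin (Matrix.diagonal w)ᵀ) c := by
    ext ξ
    simp only [LinearMap.mem_range, Module.End.mem_eigenspace_iff,
      Matrix.diagonal_transpose, Matrix.mulVecLin_apply]
    constructor
    · rintro ⟨x, rfl⟩
      funext j
      by_cases h : w j = c <;> simp [φ, Matrix.mulVec_diagonal, h, Pi.smul_apply, smul_eq_mul]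
    · intro hξ
      refine ⟨fun j => ξ j.1, ?_⟩
      funext j
      by_cases h : w j = c
      · simp [φ, h]
      · have h2 : w j * ξ j = c * ξ j := by
          have := congrFun hξ j
          simpa [Matrix.mulVec_diagonal] using this
        rcases mul_eq_mul_right_iff.mp h2 with h3 | h3
        · exact absurd h3 h
        · simp [φ, h, h3]
  rw [← hrange, LinearMap.finrank_range_of_inj hφinj, Module.finrank_fintype_fun_eq_card,
    Nat.card_eq_fintype_card]

lemma aux_ncard_eigen {m s : ℕ} (f : Module.End F (Fin m → F)) (mu : Fin s → F)
    (hinj : Function.Injective mu)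
    (hbot : ∀ c ∉ Set.range mu, Module.End.eigenspace f c = ⊥) :
    Set.ncard {ξ : Fin m → F | ξ ≠ 0 ∧ ∃ c : F, f ξ = c • ξ} =
      ∑ i, (Fintype.card F ^ Module.finrank F (Module.End.eigenspace f (mu i)) - 1) := by
  classical
  set E := fun i => Module.End.eigenspace f (mu i) with hE
  have hS : {ξ : Fin m → F | ξ ≠ 0 ∧ ∃ c : F, f ξ = c • ξ} =
      ⋃ i, ((E i : Set (Fin m → F)) \ {0}) := by
    ext ξ
    simp only [Set.mem_setOf_eq, Set.mem_iUnion, Set.mem_diff, SetLike.mem_coe,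
      Set.mem_singleton_iff]
    constructor
    · rintro ⟨hξ, c, hc⟩
      have hmem : ξ ∈ Module.End.eigenspace f c := Module.End.mem_eigenspace_iff.mpr hc
      have hne : Module.End.eigenspace f c ≠ ⊥ := by
        intro hb
        rw [hb, Submodule.mem_bot] at hmem
        exact hξ hmem
      have : c ∈ Set.range mu := by
        by_contra hcr
        exact hne (hbot c hcr)
      obtain ⟨i, rfl⟩ := this
      exact ⟨i, hmem, hξ⟩
    · rintro ⟨i, hmem, hξ⟩
      exact ⟨hξ, mu i, Module.End.mem_eigenspace_iff.mp hmem⟩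
  rw [hS]
  have hfin : ∀ i, ((E i : Set (Fin m → F)) \ {0}).Finite := fun i => Set.toFinite _
  have hU : (⋃ i, ((E i : Set (Fin m → F)) \ {0})).Finite := Set.toFinite _
  rw [Set.ncard_eq_toFinset_card _ hU]
  have hbU : hU.toFinset = Finset.univ.biUnion (fun i => (hfin i).toFinset) := by
    ext ξ
    simp only [Set.Finite.mem_toFinset, Finset.mem_biUnion, Finset.mem_univ, true_and,
      Set.mem_iUnion]
  rw [hbU, Finset.card_biUnion]
  · refine Finset.sum_congr rfl fun i _ => ?_
    rw [← Set.ncard_eq_toFinset_card _ (hfin i),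
      Set.ncard_diff_singleton_of_mem (Submodule.zero_mem (E i)),
      ← Nat.card_coe_set_eq, Nat.card_eq_fintype_card]
    congr 1
    exact Module.card_eq_pow_finrank (K := F)
  · intro i _ j _ hij
    rw [Function.onFun, Finset.disjoint_left]
    intro ξ hξi hξj
    simp only [Set.Finite.mem_toFinset, Set.mem_diff, SetLike.mem_coe,
      Set.mem_singleton_iff] at hξi hξj
    have h1 := Module.End.mem_eigenspace_iff.mp hξi.1
    have h2 := Module.End.mem_eigenspace_iff.mp hξj.1
    have : (mu i - mu j) • ξ = 0 := by
      rw [sub_smul, ← h1, ← h2, sub_self]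
    rcases smul_eq_zero.mp this with h | h
    · exact hij (hinj (sub_eq_zero.mp h))
    · exact hξi.2 h

lemma aux_card_fiber {N s : ℕ} (h : Fin s → ℕ) (e : Fin N ≃ (Σ i, Fin (h i))) (i : Fin s) :
    Nat.card {j : Fin N // (e j).1 = i} = h i := by
  have e2 : {j : Fin N // (e j).1 = i} ≃ {p : (Σ i, Fin (h i)) // p.1 = i} :=
    e.subtypeEquiv (fun j => Iff.rfl)
  have e3 : {p : (Σ i, Fin (h i)) // p.1 = i} ≃ Fin (h i) :=
    { toFun := fun p => Fin.cast (congrArg h p.2) p.1.2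
      invFun := fun b => ⟨⟨i, b⟩, rfl⟩
      left_inv := by rintro ⟨⟨j, b⟩, rfl⟩; rfl
      right_inv := fun b => rfl }
  rw [Nat.card_congr (e2.trans e3), Nat.card_eq_fintype_card, Fintype.card_fin]

end AuxEigen





/-- If `M` is diagonalizable over `F_q` with `t > 2` eigenspaces of dimensions
`g₁ ≥ g₂ ≥ … ≥ g_t`, then there is a diagonalizable matrix `M'` with `t - 1` eigenspaces
of dimensions `g₁ + g₂, g₃, …, g_t` having strictly more eigenvectors than `M`;
equivalently `(q^{g₁+g₂} - 1) + Σ_{i ≥ 3}(q^{gᵢ} - 1) > Σᵢ (q^{gᵢ} - 1)`. -/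
theorem merge_eigenspaces_more_eigenvectors {n : ℕ} {F : Type*} [Field F] [Fintype F]
    (t : ℕ) (ht : 2 < t) (g : Fin t → ℕ) (hg1 : ∀ i, 1 ≤ g i) (hmono : Antitone g)
    (M : Matrix (Fin (n + 1)) (Fin (n + 1)) F)
    (lam : Fin t → F) (hinj : Function.Injective lam)
    (hdim : ∀ i, Module.finrank F
      (Module.End.eigenspace (Matrix.mulVecLin Mᵀ) (lam i)) = g i)
    (hdiagonalizable : ∑ i, g i = n + 1) :
    (∃ (M' : Matrix (Fin (n + 1)) (Fin (n + 1)) F) (mu : Fin (t - 1) → F),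
      Function.Injective mu ∧
      (∀ lam' : F, lam' ∉ Set.range mu →
        Module.End.eigenspace (Matrix.mulVecLin M'ᵀ) lam' = ⊥) ∧
      (∀ i : Fin (t - 1),
        Module.finrank F (Module.End.eigenspace (Matrix.mulVecLin M'ᵀ) (mu i)) =
          if (i : ℕ) = 0 then g ⟨0, by omega⟩ + g ⟨1, by omega⟩
          else g ⟨(i : ℕ) + 1, by omega⟩) ∧
      Set.ncard {ξ : Fin (n + 1) → F | ξ ≠ 0 ∧ ∃ c : F, Matrix.vecMul ξ M' = c • ξ} >
        Set.ncard {ξ : Fin (n + 1) → F | ξ ≠ 0 ∧ ∃ c : F, Matrix.vecMul ξ M = c • ξ}) ∧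
    ((Fintype.card F) ^ (g ⟨0, by omega⟩ + g ⟨1, by omega⟩) - 1)
        + ∑ i : Fin t, (if 2 ≤ (i : ℕ) then (Fintype.card F) ^ g i - 1 else 0)
      > ∑ i : Fin t, ((Fintype.card F) ^ g i - 1) := by
  classical
  obtain ⟨k, rfl⟩ : ∃ k, t = k + 2 := ⟨t - 2, by omega⟩
  set q := Fintype.card F with hqdef
  -- ℕ-valued version of g
  set G : ℕ → ℕ := fun j => if hj : j < k + 2 then g ⟨j, hj⟩ else 0 with hGdef
  have hg : ∀ i : Fin (k + 2), g i = G i := by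
    intro i
    simp only [hGdef, i.isLt, dif_pos, Fin.eta]
  have hG0 : ∀ (p : 0 < k + 2), g ⟨0, p⟩ = G 0 := by
    intro p; simp only [hGdef]; rw [dif_pos p]
  have hG1 : ∀ (p : 1 < k + 2), g ⟨1, p⟩ = G 1 := by
    intro p; simp only [hGdef]; rw [dif_pos p]
  have hG1le : 1 ≤ G 0 ∧ 1 ≤ G 1 := by
    constructor
    · rw [← hG0 (by omega)]; exact hg1 _
    · rw [← hG1 (by omega)]; exact hg1 _
  -- sum of g split
  have hsumG : ∑ i : Fin (k + 2), g i = G 0 + G 1 + ∑ j ∈ Finset.range k, G (j + 2) := by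
    calc ∑ i : Fin (k + 2), g i = ∑ i : Fin (k + 2), G i :=
          Finset.sum_congr rfl fun i _ => hg i
      _ = ∑ j ∈ Finset.range (k + 2), G j := Fin.sum_univ_eq_sum_range G (k + 2)
      _ = (∑ j ∈ Finset.range (k + 1), G (j + 1)) + G 0 := Finset.sum_range_succ' G (k + 1)
      _ = ((∑ j ∈ Finset.range k, G (j + 1 + 1)) + G (0 + 1)) + G 0 := by
          rw [Finset.sum_range_succ' (fun j => G (j + 1)) k]
      _ = G 0 + G 1 + ∑ j ∈ Finset.range k, G (j + 2) := by
          simp only [show ∀ x : ℕ, G (x + 1 + 1) = G (x + 2) from fun _ => rfl, zero_add]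
          omega
  -- the merged dimension vector
  set hdims : Fin (k + 1) → ℕ := fun i =>
    if (i : ℕ) = 0 then G 0 + G 1 else G ((i : ℕ) + 1) with hdimsdef
  have hsumH : ∑ i : Fin (k + 1), hdims i = G 0 + G 1 + ∑ j ∈ Finset.range k, G (j + 2) := by
    have e1 : ∑ i : Fin (k + 1), hdims i
        = ∑ j ∈ Finset.range (k + 1), (if j = 0 then G 0 + G 1 else G (j + 1)) := by
      rw [← Fin.sum_univ_eq_sum_range (fun j => if j = 0 then G 0 + G 1 else G (j + 1)) (k + 1)]
    rw [e1, Finset.sum_range_succ' (fun j => if j = 0 then G 0 + G 1 else G (j + 1)) k]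
    have h1 : ∀ j : ℕ, (if j + 1 = 0 then G 0 + G 1 else G (j + 1 + 1)) = G (j + 2) :=
      fun j => (if_neg (Nat.succ_ne_zero j)).trans rfl
    simp only [h1]
    norm_num
    omega
  have hsum' : ∑ i : Fin (k + 1), hdims i = n + 1 := by
    rw [hsumH, ← hsumG, hdiagonalizable]
  -- the assignment of coordinates to the new eigenvalues
  obtain ⟨e⟩ : Nonempty (Fin (n + 1) ≃ (Σ i : Fin (k + 1), Fin (hdims i))) := by
    refine ⟨Fintype.equivOfCardEq ?_⟩
    simp [Fintype.card_sigma, hsum']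
  -- new eigenvalues
  set emb : Fin (k + 1) → Fin (k + 2) := fun i =>
    if (i : ℕ) = 0 then ⟨0, by omega⟩ else ⟨(i : ℕ) + 1, by omega⟩ with hembdef
  have hembval : ∀ i : Fin (k + 1), ((emb i : Fin (k + 2)) : ℕ)
      = if (i : ℕ) = 0 then 0 else (i : ℕ) + 1 := by
    intro i; by_cases hi : (i : ℕ) = 0 <;> simp only [hembdef, hi, ↓reduceIte] <;> rfl
  have hembinj : Function.Injective emb := by
    intro i j hij
    have hv := congrArg Fin.val hij
    rw [hembval i, hembval j] at hv
    apply Fin.ext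
    by_cases hi : (i : ℕ) = 0 <;> by_cases hj : (j : ℕ) = 0 <;>
      simp only [hi, hj, if_pos, if_neg, if_true, if_false] at hv <;> omega
  set mu : Fin (k + 1) → F := fun i => lam (emb i) with hmudef
  have hmuinj : Function.Injective mu := fun i j hij => hembinj (hinj hij)
  -- the diagonal matrix
  set w : Fin (n + 1) → F := fun j => mu ((e j).1) with hwdef
  set M' : Matrix (Fin (n + 1)) (Fin (n + 1)) F := Matrix.diagonal w with hM'def
  -- eigenspace facts for M'
  have hbot' : ∀ c : F, c ∉ Set.range mu →
      Module.End.eigenspace (Matrix.mulVecLin M'ᵀ) c = ⊥ := by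
    intro c hc
    exact aux_eigenspace_eq_bot w c (fun j hj => hc ⟨(e j).1, hj⟩)
  have hdim' : ∀ i : Fin (k + 1),
      Module.finrank F (Module.End.eigenspace (Matrix.mulVecLin M'ᵀ) (mu i)) = hdims i := by
    intro i
    rw [hM'def, aux_finrank_eigenspace_diagonal w (mu i)]
    calc Nat.card {j // w j = mu i} = Nat.card {j : Fin (n + 1) // (e j).1 = i} := by
          refine Nat.card_congr (Equiv.subtypeEquivRight fun j => ?_)
          exact ⟨fun hh => hmuinj hh, fun hh => congrArg mu hh⟩
      _ = hdims i := aux_card_fiber hdims e i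
  -- bottom eigenspaces for M
  have hbotM : ∀ c : F, c ∉ Set.range lam →
      Module.End.eigenspace (Matrix.mulVecLin Mᵀ) c = ⊥ := by
    intro c hc
    by_contra hne
    set f := Matrix.mulVecLin Mᵀ with hfdef
    have hinjext : Function.Injective (fun o : Option (Fin (k + 2)) => o.elim c lam) := by
      rintro (_ | i) (_ | j) hij
      · rfl
      · exact absurd ⟨j, hij.symm⟩ hc
      · exact absurd ⟨i, hij⟩ hc
      · exact congrArg some (hinj hij)
    have hInd : iSupIndep (fun o : Option (Fin (k + 2)) =>
        Module.End.eigenspace f (o.elim c lam)) :=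
      (Module.End.eigenspaces_iSupIndep f).comp hinjext
    have hle := aux_sum_finrank_le
      (fun o : Option (Fin (k + 2)) => Module.End.eigenspace f (o.elim c lam)) hInd
    rw [Fintype.sum_option] at hle
    simp only [Option.elim] at hle
    have hrk : Module.finrank F (Fin (n + 1) → F) = n + 1 := by
      simp [Module.finrank_fintype_fun_eq_card]
    have hsum2 : ∑ i : Fin (k + 2),
        Module.finrank F (Module.End.eigenspace f (lam i)) = n + 1 := by
      exact (Finset.sum_congr rfl fun i _ => hdim i).trans hdiagonalizable
    have hpos : Module.finrank F (Module.End.eigenspace f c) ≠ 0 := by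
      rw [Ne, Submodule.finrank_eq_zero]
      exact hne
    have hle' : Module.finrank F (Module.End.eigenspace f c) + ∑ i : Fin (k + 2),
        Module.finrank F (Module.End.eigenspace f (lam i)) ≤ Module.finrank F (Fin (n + 1) → F) := hle
    rw [hsum2, hrk] at hle'
    omega
  -- counts
  have hsetM : {ξ : Fin (n + 1) → F | ξ ≠ 0 ∧ ∃ c : F, Matrix.vecMul ξ M = c • ξ}
      = {ξ : Fin (n + 1) → F | ξ ≠ 0 ∧ ∃ c : F, (Matrix.mulVecLin Mᵀ) ξ = c • ξ} := by
    ext ξ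
    simp [Matrix.mulVecLin_apply, Matrix.mulVec_transpose]
  have hsetM' : {ξ : Fin (n + 1) → F | ξ ≠ 0 ∧ ∃ c : F, Matrix.vecMul ξ M' = c • ξ}
      = {ξ : Fin (n + 1) → F | ξ ≠ 0 ∧ ∃ c : F, (Matrix.mulVecLin M'ᵀ) ξ = c • ξ} := by
    ext ξ
    simp [Matrix.mulVecLin_apply, Matrix.mulVec_transpose]
  have hcM : Set.ncard {ξ : Fin (n + 1) → F | ξ ≠ 0 ∧ ∃ c : F, Matrix.vecMul ξ M = c • ξ}
      = ∑ i : Fin (k + 2), (q ^ g i - 1) := by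
    rw [hsetM, aux_ncard_eigen (Matrix.mulVecLin Mᵀ) lam hinj hbotM]
    exact Finset.sum_congr rfl fun i _ => by rw [hdim]
  have hcM' : Set.ncard {ξ : Fin (n + 1) → F | ξ ≠ 0 ∧ ∃ c : F, Matrix.vecMul ξ M' = c • ξ}
      = ∑ i : Fin (k + 1), (q ^ hdims i - 1) := by
    rw [hsetM', aux_ncard_eigen (Matrix.mulVecLin M'ᵀ) mu hmuinj hbot']
    exact Finset.sum_congr rfl fun i _ => by rw [hdim' i]
  -- arithmetic
  have hq2 : 2 ≤ q := Fintype.one_lt_card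
  have hcore : (q ^ (G 0 + G 1) - 1) > (q ^ G 0 - 1) + (q ^ G 1 - 1) := by
    have h2a : 2 ≤ q ^ G 0 := le_trans hq2 (Nat.le_self_pow (by omega) q)
    have h2b : 2 ≤ q ^ G 1 := le_trans hq2 (Nat.le_self_pow (by omega) q)
    have hmul := Nat.add_le_mul h2a h2b
    rw [pow_add]
    omega
  have hSM : ∑ i : Fin (k + 2), (q ^ g i - 1)
      = (q ^ G 0 - 1) + (q ^ G 1 - 1) + ∑ j ∈ Finset.range k, (q ^ G (j + 2) - 1) := by
    calc ∑ i : Fin (k + 2), (q ^ g i - 1) = ∑ i : Fin (k + 2), (q ^ G (i : ℕ) - 1) :=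
          Finset.sum_congr rfl fun i _ => by rw [hg i]
      _ = ∑ j ∈ Finset.range (k + 2), (q ^ G j - 1) :=
          Fin.sum_univ_eq_sum_range (fun j => q ^ G j - 1) (k + 2)
      _ = (∑ j ∈ Finset.range (k + 1), (q ^ G (j + 1) - 1)) + (q ^ G 0 - 1) :=
          Finset.sum_range_succ' _ (k + 1)
      _ = ((∑ j ∈ Finset.range k, (q ^ G (j + 1 + 1) - 1)) + (q ^ G (0 + 1) - 1))
            + (q ^ G 0 - 1) := by rw [Finset.sum_range_succ' (fun j => q ^ G (j + 1) - 1) k]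
      _ = (q ^ G 0 - 1) + (q ^ G 1 - 1) + ∑ j ∈ Finset.range k, (q ^ G (j + 2) - 1) := by
          simp only [show ∀ x : ℕ, G (x + 1 + 1) = G (x + 2) from fun _ => rfl, zero_add]
          omega
  have hSM' : ∑ i : Fin (k + 1), (q ^ hdims i - 1)
      = (q ^ (G 0 + G 1) - 1) + ∑ j ∈ Finset.range k, (q ^ G (j + 2) - 1) := by
    calc ∑ i : Fin (k + 1), (q ^ hdims i - 1)
        = ∑ j ∈ Finset.range (k + 1), (q ^ (if j = 0 then G 0 + G 1 else G (j + 1)) - 1) := by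
          rw [← Fin.sum_univ_eq_sum_range
            (fun j => q ^ (if j = 0 then G 0 + G 1 else G (j + 1)) - 1) (k + 1)]
      _ = (∑ j ∈ Finset.range k, (q ^ (if j + 1 = 0 then G 0 + G 1 else G (j + 1 + 1)) - 1))
            + (q ^ (if (0 : ℕ) = 0 then G 0 + G 1 else G 1) - 1) :=
          Finset.sum_range_succ' _ k
      _ = (q ^ (G 0 + G 1) - 1) + ∑ j ∈ Finset.range k, (q ^ G (j + 2) - 1) := by
          have h1 : ∀ j : ℕ, (if j + 1 = 0 then G 0 + G 1 else G (j + 1 + 1)) = G (j + 2) :=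
            fun j => (if_neg (Nat.succ_ne_zero j)).trans rfl
          simp only [h1]
          norm_num
          omega
  have hT : ∑ i : Fin (k + 2), (if 2 ≤ (i : ℕ) then q ^ g i - 1 else 0)
      = ∑ j ∈ Finset.range k, (q ^ G (j + 2) - 1) := by
    calc ∑ i : Fin (k + 2), (if 2 ≤ (i : ℕ) then q ^ g i - 1 else 0)
        = ∑ j ∈ Finset.range (k + 2), (if 2 ≤ j then q ^ G j - 1 else 0) := by
          rw [← Fin.sum_univ_eq_sum_range (fun j => if 2 ≤ j then q ^ G j - 1 else 0) (k + 2)]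
          exact Finset.sum_congr rfl fun i _ => by rw [hg i]
      _ = (∑ j ∈ Finset.range (k + 1), (if 2 ≤ j + 1 then q ^ G (j + 1) - 1 else 0))
            + (if 2 ≤ (0 : ℕ) then q ^ G 0 - 1 else 0) := Finset.sum_range_succ' _ (k + 1)
      _ = ((∑ j ∈ Finset.range k, (if 2 ≤ j + 1 + 1 then q ^ G (j + 1 + 1) - 1 else 0))
            + (if 2 ≤ 0 + 1 then q ^ G (0 + 1) - 1 else 0))
            + (if 2 ≤ (0 : ℕ) then q ^ G 0 - 1 else 0) := by
          rw [Finset.sum_range_succ' (fun j => if 2 ≤ j + 1 then q ^ G (j + 1) - 1 else 0) k]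
      _ = ∑ j ∈ Finset.range k, (q ^ G (j + 2) - 1) := by
          have h1 : ∀ j : ℕ, (if 2 ≤ j + 1 + 1 then q ^ G (j + 1 + 1) - 1 else 0)
              = q ^ G (j + 2) - 1 := fun j => (if_pos (by omega)).trans rfl
          simp only [h1]
          norm_num
  constructor
  · refine ⟨M', mu, hmuinj, hbot', ?_, ?_⟩
    · intro i
      rw [hdim' i]
      by_cases hi : (i : ℕ) = 0
      · rw [if_pos hi]
        have h2 : hdims i = G 0 + G 1 := by simp only [hdimsdef]; rw [if_pos hi]
        rw [h2, hG0, hG1]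
      · rw [if_neg hi]
        have h2 : hdims i = G ((i : ℕ) + 1) := by simp only [hdimsdef]; rw [if_neg hi]
        have h3 : g ⟨(i : ℕ) + 1, (by omega : (i : ℕ) + 1 < k + 2)⟩ = G ((i : ℕ) + 1) := by
          simp only [hGdef]; rw [dif_pos]
        rw [h2]
        exact h3.symm
    · rw [hcM, hcM', hSM, hSM']
      omega
  · rw [hG0, hG1, hT, hSM]
    omega
end

section
/- A non-scalar (n+1)×(n+1) matrix over F_q has at most q^n + q − 2 eigenvectors, and this maximum is attained exactly when the matrix is diagonalizable with exactly two eigenspaces, of dimensions n and 1. -/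
open Matrix


-- pairing lemma
lemma powA {q a b : ℕ} (hq : 2 ≤ q) (ha : 1 ≤ a) (hb : 1 ≤ b) :
    q ^ a + q ^ b ≤ q ^ (a + b - 1) + q ∧
    (q ^ a + q ^ b = q ^ (a + b - 1) + q ↔ a = 1 ∨ b = 1) := by
  obtain ⟨a', rfl⟩ := Nat.exists_eq_add_of_le ha
  obtain ⟨b', rfl⟩ := Nat.exists_eq_add_of_le hb
  have hred : 1 + a' + (1 + b') - 1 = a' + b' + 1 := by omega
  rw [hred]
  have key : ∀ x y : ℕ, 1 ≤ x → 1 ≤ y → x + y ≤ x * y + 1 ∧ (x + y = x * y + 1 ↔ x = 1 ∨ y = 1) := by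
    intro x y hx hy
    obtain ⟨x', rfl⟩ := Nat.exists_eq_add_of_le hx
    obtain ⟨y', rfl⟩ := Nat.exists_eq_add_of_le hy
    constructor
    · nlinarith
    · constructor
      · intro h
        have : x' * y' = 0 := by nlinarith
        rcases Nat.mul_eq_zero.mp this with h | h <;> omega
      · rintro (h | h) <;> simp_all <;> ring
  have hx : 1 ≤ q ^ a' := Nat.one_le_pow _ _ (by omega)
  have hy : 1 ≤ q ^ b' := Nat.one_le_pow _ _ (by omega)
  obtain ⟨k1, k2⟩ := key (q ^ a') (q ^ b') hx hy
  have e1 : q ^ (1 + a') + q ^ (1 + b') = q * (q ^ a' + q ^ b') := by ring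
  have e2 : q ^ (a' + b' + 1) + q = q * (q ^ a' * q ^ b' + 1) := by ring
  have hq0 : 0 < q := by omega
  constructor
  · rw [e1, e2]; exact Nat.mul_le_mul_left _ k1
  · rw [e1, e2, Nat.mul_left_cancel_iff hq0, k2]
    have hp : ∀ m : ℕ, q ^ m = 1 ↔ m = 0 := by
      intro m
      constructor
      · intro h
        by_contra hm
        have := Nat.one_lt_pow hm (by omega : 1 < q)
        omega
      · rintro rfl; simp
    rw [hp, hp]; omega

-- lemma B
lemma powB {q : ℕ} (hq : 2 ≤ q) {α : Type*} (s : Finset α) (hs : s.Nonempty) (g : α → ℕ)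
    (hpos : ∀ c ∈ s, 1 ≤ g c) :
    ∑ c ∈ s, q ^ g c ≤ q ^ (∑ c ∈ s, g c - s.card + 1) + (s.card - 1) * q := by
  classical
  revert hpos
  induction hs using Finset.Nonempty.cons_induction with
  | singleton a =>
    intro h
    simp only [Finset.sum_singleton, Finset.card_singleton]
    rw [Nat.sub_add_cancel (h a (Finset.mem_singleton_self a))]
    omega
  | cons a s ha hne ih =>
    intro hpos
    have hgs : ∀ c ∈ s, 1 ≤ g c := fun c hc => hpos c (Finset.mem_cons_of_mem hc)
    have hga : 1 ≤ g a := hpos a (Finset.mem_cons_self a s)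
    have ih' := ih hgs
    rw [Finset.sum_cons, Finset.sum_cons, Finset.card_cons]
    have hcard : s.card ≤ ∑ c ∈ s, g c := by
      calc s.card = ∑ _c ∈ s, 1 := by simp
        _ ≤ _ := Finset.sum_le_sum hgs
    have hcard1 : 1 ≤ s.card := hne.card_pos
    set S := ∑ c ∈ s, g c
    have hexp : 1 ≤ S - s.card + 1 := by omega
    have hA := (powA hq hga hexp).1
    have he : g a + (S - s.card + 1) - 1 = g a + S - (s.card + 1) + 1 := by omega
    calc q ^ g a + ∑ c ∈ s, q ^ g c ≤ q ^ g a + (q ^ (S - s.card + 1) + (s.card - 1) * q) := by omega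
      _ ≤ q ^ (g a + (S - s.card + 1) - 1) + q + (s.card - 1) * q := by omega
      _ = q ^ (g a + S - (s.card + 1) + 1) + (s.card + 1 - 1) * q := by
            rw [he]
            have h3 : s.card + 1 - 1 = s.card := by omega
            rw [h3]
            have h2 : s.card * q = (s.card - 1) * q + q := by
              obtain ⟨m, hm⟩ := Nat.exists_eq_add_of_le hcard1
              rw [hm]
              have h5 : 1 + m - 1 = m := by omega
              rw [h5]
              ring
            omega
      _ = _ := by rfl

lemma comb {q n : ℕ} (hq : 2 ≤ q) (hn : 1 ≤ n) {α : Type*} [DecidableEq α]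
    (s : Finset α) (g : α → ℕ)
    (hpos : ∀ c ∈ s, 1 ≤ g c) (hle : ∀ c ∈ s, g c ≤ n) (hsum : ∑ c ∈ s, g c ≤ n + 1) :
    (∑ c ∈ s, (q ^ g c - 1) ≤ q ^ n + q - 2) ∧
    (∑ c ∈ s, (q ^ g c - 1) = q ^ n + q - 2 ↔
       ∃ a ∈ s, ∃ b ∈ s, a ≠ b ∧ g a = n ∧ g b = 1) := by
  have hqn : q ≤ q ^ n := by
    calc q = q ^ 1 := (pow_one q).symm
      _ ≤ q ^ n := Nat.pow_le_pow_right (by omega) hn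
  have key : ∀ t : Finset α, ∑ c ∈ t, (q ^ g c - 1) + t.card = ∑ c ∈ t, q ^ g c := by
    intro t
    calc ∑ c ∈ t, (q ^ g c - 1) + t.card = ∑ c ∈ t, (q ^ g c - 1) + ∑ _c ∈ t, 1 := by simp
      _ = ∑ c ∈ t, ((q ^ g c - 1) + 1) := Finset.sum_add_distrib.symm
      _ = ∑ c ∈ t, q ^ g c := Finset.sum_congr rfl fun c _ =>
            Nat.sub_add_cancel (Nat.one_le_pow _ _ (by omega))
  by_cases h0 : s.card = 0
  · obtain rfl : s = ∅ := Finset.card_eq_zero.mp h0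
    simp only [Finset.sum_empty, Finset.notMem_empty]
    constructor
    · omega
    · constructor
      · intro h; omega
      · rintro ⟨a, ha, -⟩; exact absurd ha (by simp)
  by_cases h1 : s.card = 1
  · obtain ⟨a, rfl⟩ := Finset.card_eq_one.mp h1
    simp only [Finset.sum_singleton, Finset.mem_singleton]
    have hga : q ^ g a ≤ q ^ n := Nat.pow_le_pow_right (by omega) (hle a (by simp))
    constructor
    · omega
    · constructor
      · intro h; omega
      · rintro ⟨a', rfl, b', rfl, hne, -⟩; exact absurd rfl hne
  by_cases h2 : s.card = 2
  · obtain ⟨a, b, hab, rfl⟩ := Finset.card_eq_two.mp h2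
    rw [Finset.sum_pair hab] at hsum ⊢
    have hpa : 1 ≤ g a := hpos a (by simp)
    have hpb : 1 ≤ g b := hpos b (by simp)
    have hA := powA hq hpa hpb
    have hone_a : 1 ≤ q ^ g a := Nat.one_le_pow _ _ (by omega)
    have hone_b : 1 ≤ q ^ g b := Nat.one_le_pow _ _ (by omega)
    have hexp : g a + g b - 1 ≤ n := by omega
    have hpow : q ^ (g a + g b - 1) ≤ q ^ n := Nat.pow_le_pow_right (by omega) hexp
    constructor
    · have := hA.1; omega
    · constructor
      · intro h
        have hEq : q ^ g a + q ^ g b = q ^ n + q := by have := hA.1; omega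
        have hEq2 : q ^ (g a + g b - 1) = q ^ n := by have := hA.1; omega
        have hexpEq : g a + g b - 1 = n :=
          Nat.pow_right_injective hq hEq2
        have hOr : g a = 1 ∨ g b = 1 := hA.2.mp (by omega)
        rcases hOr with h' | h'
        · refine ⟨b, by simp, a, by simp, hab.symm, by omega, h'⟩
        · refine ⟨a, by simp, b, by simp, hab, by omega, h'⟩
      · rintro ⟨a', ha', b', hb', hne, hga', hgb'⟩
        simp only [Finset.mem_insert, Finset.mem_singleton] at ha' hb'
        have hcases : (a' = a ∧ b' = b) ∨ (a' = b ∧ b' = a) := by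
          rcases ha' with rfl | rfl <;> rcases hb' with rfl | rfl
          · exact absurd rfl hne
          · exact Or.inl ⟨rfl, rfl⟩
          · exact Or.inr ⟨rfl, rfl⟩
          · exact absurd rfl hne
        have hq1 : q ^ (1 : ℕ) = q := pow_one q
        have hqnpos : 1 ≤ q ^ n := by omega
        rcases hcases with ⟨rfl, rfl⟩ | ⟨rfl, rfl⟩
        · rw [hga', hgb', hq1]; omega
        · rw [hga', hgb', hq1]; omega
  -- card ≥ 3
  have ht3 : 3 ≤ s.card := by omega
  have hne : s.Nonempty := Finset.card_pos.mp (by omega)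
  have hB := powB hq s hne g hpos
  have htS : s.card ≤ ∑ c ∈ s, g c := by
    calc s.card = ∑ _c ∈ s, 1 := by simp
      _ ≤ _ := Finset.sum_le_sum hpos
  set S := ∑ c ∈ s, g c with hS
  set t := s.card with htdef
  have hexp : S - t + 1 ≤ n - 1 := by omega
  have hpow : q ^ (S - t + 1) ≤ q ^ (n - 1) := Nat.pow_le_pow_right (by omega) hexp
  have hAq : q ^ (n - 1) * q = q ^ n := by
    rw [← pow_succ]
    congr 1
    omega
  have hAn : n ≤ q ^ (n - 1) := by
    have h2n : n - 1 < 2 ^ (n - 1) := Nat.lt_two_pow_self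
    have h2q : 2 ^ (n - 1) ≤ q ^ (n - 1) := Nat.pow_le_pow_left hq _
    omega
  have hstrict : ∑ c ∈ s, (q ^ g c - 1) < q ^ n + q - 2 := by
    have hk := key s
    -- show ∑ q^g + 3 ≤ q^n + q + t
    have hmain : ∑ c ∈ s, q ^ g c + 3 ≤ q ^ n + q + t := by
      obtain ⟨v, rfl⟩ : ∃ v, q = v + 2 := ⟨q - 2, by omega⟩
      obtain ⟨u, hu⟩ : ∃ u, t = u + 1 := ⟨t - 1, by omega⟩
      set a := (v + 2) ^ (n - 1) with hadef
      have hua : u ≤ a := by omega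
      have h1 : ∑ c ∈ s, (v + 2) ^ g c ≤ a + u * (v + 2) := by
        have hstep : ∑ c ∈ s, (v + 2) ^ g c ≤ a + (t - 1) * (v + 2) :=
          le_trans hB (by omega)
        have hu1 : t - 1 = u := by omega
        rwa [hu1] at hstep
      have h2 : u * v ≤ a * v := Nat.mul_le_mul_right v hua
      nlinarith [hAq, h1, h2, hua]
    omega
  constructor
  · omega
  constructor
  · intro h; omega
  · rintro ⟨a, ha, b, hb, hneab, hga, hgb⟩
    -- third element gives sum > n+1
    have hsub : 1 ≤ (s \ {a, b}).card := by
      have : ({a, b} : Finset α).card = 2 := Finset.card_pair hneab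
      have hss : ({a, b} : Finset α) ⊆ s := by
        intro x hx
        simp only [Finset.mem_insert, Finset.mem_singleton] at hx
        rcases hx with rfl | rfl <;> assumption
      have := Finset.card_sdiff_of_subset hss
      omega
    obtain ⟨c, hc⟩ := Finset.card_pos.mp (by omega : 0 < (s \ {a, b}).card)
    rw [Finset.mem_sdiff, Finset.mem_insert, Finset.mem_singleton] at hc
    have hcs : c ∈ s := hc.1
    have hca : c ≠ a := fun h => hc.2 (Or.inl h)
    have hcb : c ≠ b := fun h => hc.2 (Or.inr h)
    have habc : ({a, b, c} : Finset α) ⊆ s := by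
      intro x hx
      simp only [Finset.mem_insert, Finset.mem_singleton] at hx
      rcases hx with rfl | rfl | rfl <;> assumption
    have hsum3 : g a + g b + g c ≤ ∑ x ∈ s, g x := by
      have h3 : ∑ x ∈ ({a, b, c} : Finset α), g x = g a + (g b + g c) := by
        rw [Finset.sum_insert (by simp [hneab, hca.symm]),
            Finset.sum_insert (by simp [hcb.symm]), Finset.sum_singleton]
      have := Finset.sum_le_sum_of_subset (f := g) habc
      omega
    have hgc : 1 ≤ g c := hpos c hcs
    omega

lemma sum_finrank_le {K V : Type*} [Field K] [AddCommGroup V] [Module K V]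
    [FiniteDimensional K V] {ι : Type*} (p : ι → Submodule K V) (h : iSupIndep p)
    (s : Finset ι) :
    ∑ c ∈ s, Module.finrank K (p c) ≤ Module.finrank K V := by
  classical
  have key : ∀ u : Finset ι, ∑ c ∈ u, Module.finrank K (p c)
      ≤ Module.finrank K (⨆ c ∈ (↑u : Set ι), p c : Submodule K V) := by
    intro u
    induction u using Finset.induction_on with
    | empty => simp
    | @insert a u ha ih =>
      rw [Finset.sum_insert ha]
      have hdisj : Disjoint (p a) (⨆ c ∈ (↑u : Set ι), p c) :=
        h.disjoint_biSup (by simpa using ha)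
      have hsup : (⨆ c ∈ (↑(insert a u) : Set ι), p c : Submodule K V)
          = p a ⊔ ⨆ c ∈ (↑u : Set ι), p c := by
        rw [Finset.coe_insert, iSup_insert]
      rw [hsup]
      have heq := Submodule.finrank_sup_add_finrank_inf_eq (p a) (⨆ c ∈ (↑u : Set ι), p c)
      rw [hdisj.eq_bot] at heq
      simp only [finrank_bot, add_zero] at heq
      omega
  exact le_trans (key s) (Submodule.finrank_le _)

/-- A non-scalar `(n+1) × (n+1)` matrix over `F_q` has at most `q^n + q - 2` (left)
eigenvectors, with equality exactly when it is diagonalizable with two eigenspaces of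
dimensions `n` and `1`. -/
theorem max_eigenvectors_nonscalar {n : ℕ} {F : Type*} [Field F] [Fintype F]
    (M : Matrix (Fin (n + 1)) (Fin (n + 1)) F)
    (hM : ∀ c : F, M ≠ c • (1 : Matrix (Fin (n + 1)) (Fin (n + 1)) F)) :
    Set.ncard {ξ : Fin (n + 1) → F | ξ ≠ 0 ∧ ∃ c : F, Matrix.vecMul ξ M = c • ξ}
      ≤ (Fintype.card F) ^ n + Fintype.card F - 2 ∧
    (Set.ncard {ξ : Fin (n + 1) → F | ξ ≠ 0 ∧ ∃ c : F, Matrix.vecMul ξ M = c • ξ}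
        = (Fintype.card F) ^ n + Fintype.card F - 2 ↔
      ∃ l₁ l₂ : F, l₁ ≠ l₂ ∧
        Module.finrank F (Module.End.eigenspace (Matrix.mulVecLin Mᵀ) l₁) = n ∧
        Module.finrank F (Module.End.eigenspace (Matrix.mulVecLin Mᵀ) l₂) = 1) := by
  classical
  rcases Nat.eq_zero_or_pos n with rfl | hn
  · exfalso
    apply hM (M 0 0)
    ext i j
    have hi : i = 0 := Subsingleton.elim (α := Fin 1) i 0
    have hj : j = 0 := Subsingleton.elim (α := Fin 1) j 0
    rw [hi, hj]
    simp [Matrix.one_apply]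
  set q := Fintype.card F with hqdef
  have hq : 2 ≤ q := Fintype.one_lt_card
  set E : Module.End F (Fin (n + 1) → F) := Matrix.mulVecLin Mᵀ with hEdef
  set f : F → ℕ := fun c => Module.finrank F (Module.End.eigenspace E c) with hfdef
  have hfinV : Module.finrank F (Fin (n + 1) → F) = n + 1 := by
    rw [Module.finrank_pi]; simp
  -- eigenspaces are proper
  have hle : ∀ c : F, f c ≤ n := by
    intro c
    by_contra hcon
    have hfle : f c ≤ n + 1 := hfinV ▸ Submodule.finrank_le _
    have hcon' : ¬ Module.finrank F (Module.End.eigenspace E c) ≤ n := hcon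
    have hfle' : Module.finrank F (Module.End.eigenspace E c) ≤ n + 1 := hfle
    have htop : Module.End.eigenspace E c = ⊤ :=
      Submodule.eq_top_of_finrank_eq (by rw [hfinV]; omega)
    apply hM c
    ext i j
    have hmem : (Pi.single i 1 : Fin (n + 1) → F) ∈ Module.End.eigenspace E c := by
      rw [htop]; exact Submodule.mem_top
    rw [Module.End.mem_eigenspace_iff] at hmem
    have hev := congrFun hmem j
    have hE : E (Pi.single i 1) j = M i j := by
      rw [hEdef]
      simp [Matrix.mulVecLin_apply, Matrix.mulVec_single, Matrix.transpose_apply]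
    rw [hE] at hev
    rw [hev]
    simp [Pi.single_apply, Matrix.one_apply]
    by_cases h : i = j <;> simp [h]
    intro h'
    exact absurd h'.symm h
  -- sum of finranks bounded
  have hsum : ∑ c : F, f c ≤ n + 1 := by
    rw [← hfinV]
    exact sum_finrank_le _ (Module.End.eigenspaces_iSupIndep E) Finset.univ
  -- counting
  set T : F → Set (Fin (n + 1) → F) :=
    fun c => ((Module.End.eigenspace E c : Set (Fin (n + 1) → F)) \ {0}) with hTdef
  have hU : {ξ : Fin (n + 1) → F | ξ ≠ 0 ∧ ∃ c : F, Matrix.vecMul ξ M = c • ξ}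
      = ⋃ c : F, T c := by
    ext ξ
    simp only [Set.mem_setOf_eq, Set.mem_iUnion, hTdef, Set.mem_diff, SetLike.mem_coe,
      Set.mem_singleton_iff, Module.End.mem_eigenspace_iff, hEdef, Matrix.mulVecLin_apply,
      Matrix.mulVec_transpose]
    tauto
  have hTcard : ∀ c : F, (T c).ncard = q ^ f c - 1 := by
    intro c
    have hsub : ({0} : Set (Fin (n + 1) → F)) ⊆ (Module.End.eigenspace E c : Set _) := by
      simp [Set.singleton_subset_iff]
    have hes : ((Module.End.eigenspace E c : Set (Fin (n + 1) → F))).ncard = q ^ f c := by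
      rw [← Nat.card_coe_set_eq]
      rw [SetLike.coe_sort_coe, Nat.card_eq_fintype_card]
      exact Module.card_eq_pow_finrank
    rw [hTdef]
    rw [Set.ncard_diff hsub (Set.toFinite _), hes, Set.ncard_singleton]
  have hdisj : ∀ c ∈ (Finset.univ : Finset F), ∀ c' ∈ (Finset.univ : Finset F), c ≠ c' →
      Disjoint ((Set.toFinite (T c)).toFinset) ((Set.toFinite (T c')).toFinset) := by
    intro c _ c' _ hne
    rw [Finset.disjoint_left]
    intro x hx hx'
    rw [Set.Finite.mem_toFinset] at hx hx'
    obtain ⟨hx1, hx0⟩ := hx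
    obtain ⟨hx1', _⟩ := hx'
    rw [SetLike.mem_coe, Module.End.mem_eigenspace_iff] at hx1 hx1'
    have : (c - c') • x = 0 := by rw [sub_smul, hx1.symm.trans hx1']; simp
    rcases smul_eq_zero.mp this with h | h
    · exact hne (by linear_combination (norm := ring_nf) h)
    · exact hx0 h
  have hcount : Set.ncard {ξ : Fin (n + 1) → F | ξ ≠ 0 ∧ ∃ c : F, Matrix.vecMul ξ M = c • ξ}
      = ∑ c : F, (q ^ f c - 1) := by
    rw [hU]
    have hfin : (⋃ c : F, T c).Finite := Set.toFinite _
    rw [Set.ncard_eq_toFinset_card _ hfin]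
    have hfs : hfin.toFinset = Finset.univ.biUnion (fun c => (Set.toFinite (T c)).toFinset) := by
      ext x
      simp only [Set.Finite.mem_toFinset, Finset.mem_biUnion, Finset.mem_univ, true_and]
      exact Set.mem_iUnion
    rw [hfs, Finset.card_biUnion hdisj]
    exact Finset.sum_congr rfl fun c _ => by
      rw [← Set.ncard_eq_toFinset_card _ (Set.toFinite (T c)), hTcard c]
  -- restrict to support
  set s : Finset F := Finset.univ.filter (fun c => f c ≠ 0) with hsdef
  have hsupp : ∑ c : F, (q ^ f c - 1) = ∑ c ∈ s, (q ^ f c - 1) := by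
    symm
    apply Finset.sum_subset (Finset.filter_subset _ _)
    intro c _ hc
    have : f c = 0 := by
      by_contra h
      exact hc (Finset.mem_filter.mpr ⟨Finset.mem_univ _, h⟩)
    simp [this]
  have hpos' : ∀ c ∈ s, 1 ≤ f c := by
    intro c hc
    rw [hsdef, Finset.mem_filter] at hc
    omega
  have hle' : ∀ c ∈ s, f c ≤ n := fun c _ => hle c
  have hsum' : ∑ c ∈ s, f c ≤ n + 1 :=
    le_trans (Finset.sum_le_sum_of_subset (Finset.filter_subset _ _)) hsum
  obtain ⟨hbound, hiff⟩ := comb hq hn s f hpos' hle' hsum'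
  rw [hcount, hsupp]
  refine ⟨hbound, hiff.trans ?_⟩
  constructor
  · rintro ⟨a, _, b, _, hne, hga, hgb⟩
    exact ⟨a, b, hne, hga, hgb⟩
  · rintro ⟨l₁, l₂, hne, h₁, h₂⟩
    have hf₁ : f l₁ = n := h₁
    have hf₂ : f l₂ = 1 := h₂
    have hm₁ : l₁ ∈ s := Finset.mem_filter.mpr ⟨Finset.mem_univ _, by omega⟩
    have hm₂ : l₂ ∈ s := Finset.mem_filter.mpr ⟨Finset.mem_univ _, by omega⟩
    exact ⟨l₁, hm₁, l₂, hm₂, hne, hf₁, hf₂⟩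
end

section
/- Let M be a non-scalar (n+1)×(n+1) matrix over F_q whose total number of (left) eigenvectors equals q^n − 1. Then, after replacing M by M − λI for the eigenvalue λ whose eigenspace has largest dimension, the resulting matrix has rank 1 and trace 0. -/
open Matrix

set_option maxHeartbeats 1000000 in
/-- If a non-scalar matrix `M` over `F_q` has exactly `q^n - 1` left eigenvectors, then
`M - λI` has rank `1` and trace `0`, where `λ` is the eigenvalue whose eigenspace has the
largest dimension. -/
theorem rank_one_trace_zero_of_second_lowest {n : ℕ} {F : Type*} [Field F] [Fintype F]
    (M : Matrix (Fin (n + 1)) (Fin (n + 1)) F)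
    (hM : ∀ c : F, M ≠ c • (1 : Matrix (Fin (n + 1)) (Fin (n + 1)) F))
    (hnum : Set.ncard {ξ : Fin (n + 1) → F | ξ ≠ 0 ∧ ∃ c : F, Matrix.vecMul ξ M = c • ξ}
      = (Fintype.card F) ^ n - 1) :
    ∃ l : F,
      (∀ mu : F, Module.finrank F (Module.End.eigenspace (Matrix.mulVecLin Mᵀ) mu)
        ≤ Module.finrank F (Module.End.eigenspace (Matrix.mulVecLin Mᵀ) l)) ∧
      (M - l • (1 : Matrix (Fin (n + 1)) (Fin (n + 1)) F)).rank = 1 ∧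
      Matrix.trace (M - l • (1 : Matrix (Fin (n + 1)) (Fin (n + 1)) F)) = 0 := by
  classical
  set T := Matrix.mulVecLin Mᵀ with hTdef
  set E : F → Submodule F (Fin (n + 1) → F) := fun c => Module.End.eigenspace T c with hEdef
  set d : F → ℕ := fun c => Module.finrank F (E c) with hddef
  set q := Fintype.card F with hqdef
  have hq2 : 2 ≤ q := Fintype.one_lt_card
  -- dispatch n = 0
  rcases Nat.eq_zero_or_pos n with hn | hn
  · subst hn
    refine absurd ?_ (hM (M 0 0))
    ext i j
    fin_cases i <;> fin_cases j <;> simp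
  -- counting: the set of left eigenvectors is the disjoint union of punctured eigenspaces
  have hTapp : ∀ ξ : Fin (n + 1) → F, T ξ = Matrix.vecMul ξ M := by
    intro ξ; rw [hTdef, Matrix.mulVecLin_apply, Matrix.mulVec_transpose]
  set f : F → Finset (Fin (n + 1) → F) :=
    fun c => ((E c : Set (Fin (n + 1) → F)) \ {0}).toFinset with hfdef
  have hmemf : ∀ c (ξ : Fin (n + 1) → F), ξ ∈ f c ↔ (T ξ = c • ξ ∧ ξ ≠ 0) := by
    intro c ξ
    rw [hfdef]
    simp only [Set.mem_toFinset, Set.mem_diff, SetLike.mem_coe, Set.mem_singleton_iff]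
    rw [hEdef]
    simp [Module.End.mem_eigenspace_iff]
  have hSet : {ξ : Fin (n + 1) → F | ξ ≠ 0 ∧ ∃ c : F, Matrix.vecMul ξ M = c • ξ}
      = ↑(Finset.univ.biUnion f) := by
    ext ξ
    simp only [Set.mem_setOf_eq, Finset.coe_biUnion, Finset.coe_univ, Set.mem_iUnion,
      Set.mem_univ, Finset.mem_coe, true_and]
    constructor
    · rintro ⟨h0, c, hc⟩
      exact ⟨c, trivial, (hmemf c ξ).mpr ⟨by rw [hTapp]; exact hc, h0⟩⟩
    · rintro ⟨c, -, hc⟩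
      obtain ⟨h1, h0⟩ := (hmemf c ξ).mp hc
      exact ⟨h0, c, by rw [← hTapp]; exact h1⟩
  have hdisj : ∀ c c' : F, c ≠ c' → Disjoint (f c) (f c') := by
    intro c c' hcc'
    rw [Finset.disjoint_left]
    intro ξ h1 h2
    obtain ⟨e1, hne⟩ := (hmemf c ξ).mp h1
    obtain ⟨e2, -⟩ := (hmemf c' ξ).mp h2
    have : (c - c') • ξ = 0 := by rw [sub_smul, ← e1, ← e2, sub_self]
    rcases smul_eq_zero.mp this with h | h
    · exact hcc' (sub_eq_zero.mp h)
    · exact hne h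
  have hcardE : ∀ c : F, (f c).card = q ^ d c - 1 := by
    intro c
    have h0 : (0 : Fin (n + 1) → F) ∈ (E c : Set (Fin (n + 1) → F)).toFinset := by
      simp
    rw [hfdef]
    simp only
    rw [Set.toFinset_diff, Set.toFinset_singleton, Finset.sdiff_singleton_eq_erase,
      Finset.card_erase_of_mem h0, Set.toFinset_card]
    congr 1
    calc Fintype.card ((E c : Set (Fin (n + 1) → F)) : Type _)
        = Fintype.card (E c) := Fintype.card_congr (Equiv.refl _)
      _ = q ^ d c := Module.card_eq_pow_finrank
  have hsum : ∑ c : F, (q ^ d c - 1) = q ^ n - 1 := by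
    rw [← hnum, hSet, Set.ncard_coe_finset,
      Finset.card_biUnion (fun c _ c' _ h => hdisj c c' h)]
    exact (Finset.sum_congr rfl fun c _ => hcardE c).symm
  -- arithmetic: exactly one eigenvalue, of eigenspace dimension n
  have hqn2 : 2 ≤ q ^ n := by
    calc 2 ≤ q := hq2
    _ = q ^ 1 := (pow_one q).symm
    _ ≤ q ^ n := Nat.pow_le_pow_right (by omega) hn
  set s : Finset F := Finset.univ.filter (fun c => d c ≠ 0) with hsdef
  have h1 : ∑ c ∈ s, (q ^ d c - 1) = q ^ n - 1 := by
    rw [← hsum]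
    refine Finset.sum_subset (Finset.subset_univ s) ?_
    intro c _ hc
    have : d c = 0 := by
      by_contra h
      exact hc (Finset.mem_filter.mpr ⟨Finset.mem_univ c, h⟩)
    simp [this]
  have hpow1 : ∀ c : F, 1 ≤ q ^ d c := fun c => Nat.one_le_pow _ _ (by omega)
  have h2 : ∑ c ∈ s, q ^ d c = (q ^ n - 1) + s.card := by
    rw [← h1, Finset.card_eq_sum_ones, ← Finset.sum_add_distrib]
    refine Finset.sum_congr rfl fun c _ => ?_
    have := hpow1 c
    omega
  have hdvd : q ∣ ∑ c ∈ s, q ^ d c := by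
    refine Finset.dvd_sum fun c hc => dvd_pow_self q ?_
    exact (Finset.mem_filter.mp hc).2
  have hcard1 : s.card ≠ 0 := by
    intro h
    rw [Finset.card_eq_zero.mp h] at h2
    simp at h2
    omega
  have hcardle : s.card ≤ q := by
    calc s.card ≤ Finset.univ.card := Finset.card_filter_le _ _
    _ = q := by rw [Finset.card_univ]
  have hdvd2 : q ∣ s.card - 1 := by
    have hqn : q ∣ q ^ n := dvd_pow_self q (by omega)
    have he : ∑ c ∈ s, q ^ d c = q ^ n + (s.card - 1) := by omega
    rw [he] at hdvd
    exact (Nat.dvd_add_right hqn).mp hdvd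
  have hcard : s.card = 1 := by
    rcases Nat.eq_zero_or_pos (s.card - 1) with h | h
    · omega
    · have := Nat.le_of_dvd h hdvd2
      omega
  obtain ⟨l, hl⟩ := Finset.card_eq_one.mp hcard
  have hdl : d l = n := by
    rw [hl, Finset.sum_singleton] at h1
    have : q ^ d l = q ^ n := by omega
    exact Nat.pow_right_injective hq2 this
  have hzero : ∀ c : F, c ≠ l → d c = 0 := by
    intro c hc
    by_contra h
    have : c ∈ s := Finset.mem_filter.mpr ⟨Finset.mem_univ c, h⟩
    rw [hl, Finset.mem_singleton] at this
    exact hc this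
  -- kernel of (M - l•1)ᵀ is the eigenspace of l
  have hker : LinearMap.ker ((M - l • (1 : Matrix (Fin (n + 1)) (Fin (n + 1)) F))ᵀ.mulVecLin)
      = E l := by
    ext x
    rw [LinearMap.mem_ker, hEdef]
    simp only [Matrix.mulVecLin_apply, transpose_sub, transpose_smul, transpose_one,
      Matrix.sub_mulVec, Matrix.smul_mulVec, Matrix.one_mulVec]
    rw [Module.End.mem_eigenspace_iff, sub_eq_zero, hTdef, Matrix.mulVecLin_apply]
  have h3 := LinearMap.finrank_range_add_finrank_ker
    ((M - l • (1 : Matrix (Fin (n + 1)) (Fin (n + 1)) F))ᵀ.mulVecLin)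
  rw [hker] at h3
  have hfr : Module.finrank F (Fin (n + 1) → F) = n + 1 := by simp
  rw [hfr] at h3
  have hdl' : Module.finrank F (E l) = n := hdl
  have hrange1 : Module.finrank F
      (LinearMap.range ((M - l • (1 : Matrix (Fin (n + 1)) (Fin (n + 1)) F))ᵀ.mulVecLin))
      = 1 := by omega
  refine ⟨l, ?_, ?_, ?_⟩
  · intro mu
    show d mu ≤ d l
    rcases eq_or_ne mu l with h | h
    · rw [h]
    · rw [hzero mu h, hdl]; omega
  · rw [← Matrix.rank_transpose]
    exact hrange1
  · -- trace
    by_contra hc0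
    obtain ⟨w, hw0, hwgen⟩ := finrank_eq_one_iff'.mp hrange1
    set W : Fin (n + 1) → F := (w : Fin (n + 1) → F) with hWdef
    have hW0 : W ≠ 0 := fun h => hw0 (Subtype.ext h)
    have hcol : ∀ j, ∃ c : F,
        c • W = (M - l • (1 : Matrix (Fin (n + 1)) (Fin (n + 1)) F))ᵀ *ᵥ Pi.single j 1 := by
      intro j
      obtain ⟨c, hc⟩ := hwgen
        ⟨(M - l • (1 : Matrix (Fin (n + 1)) (Fin (n + 1)) F))ᵀ.mulVecLin (Pi.single j 1),
          LinearMap.mem_range_self _ _⟩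
      exact ⟨c, congrArg Subtype.val hc⟩
    choose u hu using hcol
    have hentry : ∀ i j,
        (M - l • (1 : Matrix (Fin (n + 1)) (Fin (n + 1)) F))ᵀ i j = u j * W i := by
      intro i j
      have := congrFun (hu j) i
      simp only [Matrix.mulVec_single, Pi.smul_apply, smul_eq_mul, mul_one,
        MulOpposite.op_one, one_smul, Matrix.col_apply] at this
      exact this.symm
    set c : F := ∑ i, u i * W i with hcdef
    have htr : Matrix.trace (M - l • (1 : Matrix (Fin (n + 1)) (Fin (n + 1)) F)) = c := by
      rw [hcdef, Matrix.trace]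
      refine Finset.sum_congr rfl fun i _ => ?_
      have := hentry i i
      rw [Matrix.transpose_apply] at this
      exact this
    have hcne : c ≠ 0 := by rw [← htr]; exact hc0
    have h5 : (M - l • (1 : Matrix (Fin (n + 1)) (Fin (n + 1)) F))ᵀ *ᵥ W = c • W := by
      ext i
      simp only [Matrix.mulVec, dotProduct, Pi.smul_apply, smul_eq_mul]
      calc ∑ j, (M - l • (1 : Matrix (Fin (n + 1)) (Fin (n + 1)) F))ᵀ i j * W j
          = ∑ j, u j * W j * W i := by
            refine Finset.sum_congr rfl fun j _ => ?_
            rw [hentry]; ring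
        _ = c * W i := by rw [← Finset.sum_mul, hcdef]
    have h6 : T W = (c + l) • W := by
      have hMt : Mᵀ = (M - l • (1 : Matrix (Fin (n + 1)) (Fin (n + 1)) F))ᵀ + l • 1 := by
        rw [transpose_sub, transpose_smul, transpose_one, sub_add_cancel]
      rw [hTdef, Matrix.mulVecLin_apply, hMt, Matrix.add_mulVec, h5,
        Matrix.smul_mulVec, Matrix.one_mulVec, add_smul]
    have hmem : W ∈ E (c + l) := by
      rw [hEdef]; exact Module.End.mem_eigenspace_iff.mpr h6
    have hne : c + l ≠ l := fun h => hcne (add_eq_right.mp h)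
    have hd0 : Module.finrank F (E (c + l)) = 0 := hzero _ hne
    have hbot : E (c + l) = ⊥ := Submodule.finrank_eq_zero.mp hd0
    rw [hbot, Submodule.mem_bot] at hmem
    exact hW0 hmem
end

section
/- Let n ≥ 1 and q a prime power. For every non-scalar matrix M ∈ M_{n+1}(F_q), the quantity N₁ − |Λ₁ ∩ [M^⊥]|, which equals q^{n−1}(q^{n+1}−1)/(q−1) − q^{n−1}θ_M, is minimized exactly when θ_M = (q^n − 1)/(q−1) + 1, giving minimum value q^{2n−1} − q^{n−1}. -/
open Matrix

private lemma aux_pow_add {q : ℕ} (hq : 1 ≤ q) (a b : ℕ) :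
    q ^ a + q ^ b ≤ q ^ (a + b) + 1 := by
  obtain ⟨x, hx⟩ : ∃ x, q ^ a = x + 1 := ⟨q ^ a - 1, by have := Nat.one_le_pow a q (by omega); omega⟩
  obtain ⟨y, hy⟩ : ∃ y, q ^ b = y + 1 := ⟨q ^ b - 1, by have := Nat.one_le_pow b q (by omega); omega⟩
  have h : q ^ (a + b) = q ^ a * q ^ b := pow_add q a b
  rw [hx, hy] at h ⊢
  have h2 : (x + 1) * (y + 1) = x * y + x + y + 1 := by ring
  omega

private lemma aux_pow_add' {q : ℕ} (hq : 1 ≤ q) {a b : ℕ} (ha : 1 ≤ a) (hb : 1 ≤ b) :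
    q ^ a + q ^ b ≤ q ^ (a + b - 1) + q := by
  obtain ⟨a', rfl⟩ : ∃ a', a = a' + 1 := ⟨a - 1, by omega⟩
  obtain ⟨b', rfl⟩ : ∃ b', b = b' + 1 := ⟨b - 1, by omega⟩
  have key := aux_pow_add hq a' b'
  have h1 : q ^ (a' + 1) = q * q ^ a' := by ring
  have h2 : q ^ (b' + 1) = q * q ^ b' := by ring
  have h3 : a' + 1 + (b' + 1) - 1 = (a' + b') + 1 := by omega
  have h4 : q ^ ((a' + b') + 1) = q * q ^ (a' + b') := by ring
  rw [h1, h2, h3, h4]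
  calc q * q ^ a' + q * q ^ b' = q * (q ^ a' + q ^ b') := by ring
    _ ≤ q * (q ^ (a' + b') + 1) := Nat.mul_le_mul_left q key
    _ = q * q ^ (a' + b') + q := by ring

private lemma aux_sum_pow {ι : Type*} {q : ℕ} (hq : 1 ≤ q) (d : ι → ℕ) (s : Finset ι) :
    ∑ i ∈ s, (q ^ d i - 1) ≤ q ^ (∑ i ∈ s, d i) - 1 := by
  classical
  induction s using Finset.induction_on with
  | empty => simp
  | @insert a s ha ih =>
    rw [Finset.sum_insert ha, Finset.sum_insert ha]
    have key := aux_pow_add hq (d a) (∑ i ∈ s, d i)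
    have h1 := Nat.one_le_pow (d a) q (by omega)
    have h2 := Nat.one_le_pow (∑ i ∈ s, d i) q (by omega)
    have h3 := Nat.one_le_pow (d a + ∑ i ∈ s, d i) q (by omega)
    omega

private lemma aux_comb {ι : Type*} {q n : ℕ} (hq : 2 ≤ q) (hn : 1 ≤ n) (d : ι → ℕ)
    (s : Finset ι) (hd : ∀ i ∈ s, d i ≤ n) (hsum : ∑ i ∈ s, d i ≤ n + 1) :
    ∑ i ∈ s, (q ^ d i - 1) ≤ q ^ n + q - 2 := by
  classical
  have hq1 : 1 ≤ q := by omega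
  have hqn : q ≤ q ^ n := Nat.le_self_pow (by omega) q
  set s' := s.filter (fun i => 1 ≤ d i) with hs'
  have hfe : ∑ i ∈ s, (q ^ d i - 1) = ∑ i ∈ s', (q ^ d i - 1) := by
    rw [hs', Finset.sum_filter_of_ne]
    intro i _ h
    by_contra hdi
    push_neg at hdi
    interval_cases h' : d i
    · simp at h
  have hsum' : ∑ i ∈ s', d i ≤ n + 1 :=
    le_trans (Finset.sum_le_sum_of_subset (Finset.filter_subset _ _)) hsum
  rw [hfe]
  rcases Finset.eq_empty_or_nonempty s' with he | ⟨a, ha⟩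
  · rw [he]; simp only [Finset.sum_empty]; omega
  · have hsplit := Finset.add_sum_erase s' d ha
    have hsplitf : (q ^ d a - 1) + ∑ i ∈ s'.erase a, (q ^ d i - 1) = ∑ i ∈ s', (q ^ d i - 1) :=
      Finset.add_sum_erase s' (fun i => q ^ d i - 1) ha
    have hda1 : 1 ≤ d a := (Finset.mem_filter.1 ha).2
    have hdan : d a ≤ n := hd a (Finset.mem_filter.1 ha).1
    rcases Finset.eq_empty_or_nonempty (s'.erase a) with hte | ⟨b, hb⟩
    · rw [← hsplitf, hte]
      simp only [Finset.sum_empty, add_zero]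
      have : q ^ d a ≤ q ^ n := Nat.pow_le_pow_right hq1 hdan
      omega
    · have hdb1 : 1 ≤ d b := (Finset.mem_filter.1 (Finset.mem_of_mem_erase hb)).2
      have hT1 : 1 ≤ ∑ i ∈ s'.erase a, d i :=
        le_trans hdb1 (Finset.single_le_sum (f := d) (fun _ _ => Nat.zero_le _) hb)
      have hB := aux_sum_pow hq1 d (s'.erase a)
      have hA := aux_pow_add' hq1 hda1 hT1
      have hle : d a + ∑ i ∈ s'.erase a, d i - 1 ≤ n := by omega
      have hpow : q ^ (d a + ∑ i ∈ s'.erase a, d i - 1) ≤ q ^ n := Nat.pow_le_pow_right hq1 hle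
      have h1 := Nat.one_le_pow (d a) q (by omega)
      have h2 := Nat.one_le_pow (∑ i ∈ s'.erase a, d i) q (by omega)
      omega

private lemma aux_sum_finrank {K V : Type*} [DivisionRing K] [AddCommGroup V] [Module K V]
    [FiniteDimensional K V] {ι : Type*} {p : ι → Submodule K V} (h : iSupIndep p)
    (s : Finset ι) : ∑ i ∈ s, Module.finrank K (p i) ≤ Module.finrank K V := by
  classical
  have key : ∀ u : Finset ι, ∑ i ∈ u, Module.finrank K (p i)
      ≤ Module.finrank K (u.sup p : Submodule K V) := by
    intro u
    induction u using Finset.induction_on with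
    | empty => simp
    | @insert a u ha ih =>
      rw [Finset.sum_insert ha, Finset.sup_insert]
      have hdisj : Disjoint (p a) (u.sup p) := by
        rw [Finset.sup_eq_iSup]
        exact h.disjoint_biSup (by simpa using ha)
      have heq := Submodule.finrank_sup_add_finrank_inf_eq (p a) (u.sup p)
      rw [hdisj.eq_bot] at heq
      simp only [finrank_bot, add_zero] at heq
      omega
  exact (key s).trans (Submodule.finrank_le _)

/-- Among non-scalar matrices `M`, the weight `q^{n-1}(q^{n+1}-1)/(q-1) - q^{n-1} θ_M`
(stated multiplied through by `q - 1`, with `ν_M = (q-1)θ_M` the number of left eigenvectors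
of `M`) is at least `(q-1)(q^{2n-1} - q^{n-1})`, with equality exactly when
`θ_M = (q^n - 1)/(q - 1) + 1`, i.e. `ν_M = q^n + q - 2`. -/
theorem minimum_distance_Lambda_one {n : ℕ} (hn : 1 ≤ n)
    {F : Type*} [Field F] [Fintype F]
    (M : Matrix (Fin (n + 1)) (Fin (n + 1)) F)
    (hM : ∀ c : F, M ≠ c • (1 : Matrix (Fin (n + 1)) (Fin (n + 1)) F)) :
    (((Fintype.card F : ℤ)) ^ (n - 1) * ((Fintype.card F : ℤ) ^ (n + 1) - 1)
        - (Fintype.card F : ℤ) ^ (n - 1) *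
          (Set.ncard {ξ : Fin (n + 1) → F | ξ ≠ 0 ∧ ∃ c : F, Matrix.vecMul ξ M = c • ξ} : ℤ)
      ≥ ((Fintype.card F : ℤ) - 1) *
          ((Fintype.card F : ℤ) ^ (2 * n - 1) - (Fintype.card F : ℤ) ^ (n - 1))) ∧
    (((Fintype.card F : ℤ)) ^ (n - 1) * ((Fintype.card F : ℤ) ^ (n + 1) - 1)
        - (Fintype.card F : ℤ) ^ (n - 1) *
          (Set.ncard {ξ : Fin (n + 1) → F | ξ ≠ 0 ∧ ∃ c : F, Matrix.vecMul ξ M = c • ξ} : ℤ)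
      = ((Fintype.card F : ℤ) - 1) *
          ((Fintype.card F : ℤ) ^ (2 * n - 1) - (Fintype.card F : ℤ) ^ (n - 1))
      ↔ Set.ncard {ξ : Fin (n + 1) → F | ξ ≠ 0 ∧ ∃ c : F, Matrix.vecMul ξ M = c • ξ}
          = (Fintype.card F) ^ n + Fintype.card F - 2) := by
  classical
  set q := Fintype.card F with hqdef
  have hq : 2 ≤ q := Fintype.one_lt_card
  set S := {ξ : Fin (n + 1) → F | ξ ≠ 0 ∧ ∃ c : F, Matrix.vecMul ξ M = c • ξ} with hSdef
  set f : Module.End F (Fin (n + 1) → F) := Matrix.mulVecLin Mᵀ with hfdef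
  have hmem : ∀ (ξ : Fin (n + 1) → F) (c : F),
      ξ ∈ f.eigenspace c ↔ Matrix.vecMul ξ M = c • ξ := by
    intro ξ c
    rw [Module.End.mem_eigenspace_iff]
    simp [hfdef, Matrix.mulVecLin_apply, Matrix.mulVec_transpose]
  have hVrank : Module.finrank F (Fin (n + 1) → F) = n + 1 := by
    simp [Module.finrank_pi]
  have hd_le : ∀ c : F, Module.finrank F (f.eigenspace c) ≤ n := by
    intro c
    by_contra hlt
    push_neg at hlt
    have hle : Module.finrank F (f.eigenspace c) ≤ n + 1 := by
      have := Submodule.finrank_le (f.eigenspace c)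
      rwa [hVrank] at this
    have htop : f.eigenspace c = ⊤ := by
      apply Submodule.eq_top_of_finrank_eq
      rw [hVrank]; omega
    apply hM c
    ext i j
    have hx : Pi.single i 1 ∈ f.eigenspace c := htop ▸ Submodule.mem_top
    rw [hmem, Matrix.single_one_vecMul] at hx
    have := congrFun hx j
    simp only [Pi.smul_apply, smul_eq_mul] at this
    rw [show M i j = M.row i j from rfl, this]
    by_cases hij : i = j <;> simp [Matrix.one_apply, Pi.single_apply, hij, eq_comm]
  have hsum : ∑ c : F, Module.finrank F (f.eigenspace c) ≤ n + 1 := by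
    have := aux_sum_finrank f.eigenspaces_iSupIndep (Finset.univ (α := F))
    rwa [hVrank] at this
  -- cardinality of each punctured eigenspace
  have hcardE : ∀ c : F, ((f.eigenspace c : Set (Fin (n + 1) → F)) \ {0}).ncard
      = q ^ Module.finrank F (f.eigenspace c) - 1 := by
    intro c
    rw [Set.ncard_diff_singleton_of_mem (by simp : (0 : Fin (n + 1) → F) ∈
      (f.eigenspace c : Set (Fin (n + 1) → F)))]
    congr 1
    rw [← Nat.card_coe_set_eq, Nat.card_eq_fintype_card]
    exact Module.card_eq_pow_finrank (K := F) (V := f.eigenspace c)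
  -- bound on ncard S
  have hν : S.ncard ≤ q ^ n + q - 2 := by
    have hSfin : S.Finite := Set.toFinite _
    have hfin : ∀ c : F, ((f.eigenspace c : Set (Fin (n + 1) → F)) \ {0}).Finite :=
      fun c => Set.toFinite _
    have hsub : hSfin.toFinset ⊆
        Finset.univ.biUnion (fun c : F => (hfin c).toFinset) := by
      intro ξ hξ
      rw [Set.Finite.mem_toFinset] at hξ
      obtain ⟨hne, c, hc⟩ := hξ
      simp only [Finset.mem_biUnion, Finset.mem_univ, Set.Finite.mem_toFinset, Set.mem_diff,
        SetLike.mem_coe, Set.mem_singleton_iff]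
      exact ⟨c, trivial, (hmem ξ c).2 hc, hne⟩
    calc S.ncard = hSfin.toFinset.card := Set.ncard_eq_toFinset_card S hSfin
      _ ≤ (Finset.univ.biUnion (fun c : F => (hfin c).toFinset)).card :=
          Finset.card_le_card hsub
      _ ≤ ∑ c : F, (hfin c).toFinset.card := Finset.card_biUnion_le
      _ = ∑ c : F, (q ^ Module.finrank F (f.eigenspace c) - 1) := by
          refine Finset.sum_congr rfl fun c _ => ?_
          rw [← Set.ncard_eq_toFinset_card _ (hfin c), hcardE c]
      _ ≤ q ^ n + q - 2 := aux_comb hq hn _ _ (fun c _ => hd_le c) hsum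
  -- arithmetic conclusion
  obtain ⟨m, rfl⟩ : ∃ m, n = m + 1 := ⟨n - 1, by omega⟩
  have e1 : m + 1 - 1 = m := by omega
  have e2 : 2 * (m + 1) - 1 = 2 * m + 1 := by omega
  set Q : ℤ := (q : ℤ) with hQdef
  have hQ2 : (2 : ℤ) ≤ Q := by rw [hQdef]; exact_mod_cast hq
  have hQm : (0 : ℤ) < Q ^ m := pow_pos (by omega) m
  have h2 : 2 ≤ q ^ (m + 1) + q := by
    have := Nat.one_le_pow (m + 1) q (by omega); omega
  have hcastsub : ((q ^ (m + 1) + q - 2 : ℕ) : ℤ) = Q ^ (m + 1) + Q - 2 := by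
    rw [Nat.cast_sub h2, hQdef]; push_cast; ring
  have hbound : (S.ncard : ℤ) ≤ Q ^ (m + 1) + Q - 2 := by
    rw [← hcastsub]; exact_mod_cast hν
  have e3 : Q ^ (m + 1 + 1) = Q ^ m * Q ^ 2 := by ring
  have e4 : Q ^ (2 * m + 1) = Q ^ m * Q ^ m * Q := by ring
  have e5 : Q ^ (m + 1) = Q ^ m * Q := by ring
  rw [e1, e2]
  rw [e5] at hbound
  constructor
  · have key : Q ^ m * (S.ncard : ℤ) ≤ Q ^ m * (Q ^ m * Q + Q - 2) :=
      mul_le_mul_of_nonneg_left hbound (le_of_lt hQm)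
    rw [ge_iff_le, e3, e4]
    linarith [key]
  · constructor
    · intro h
      rw [e3, e4] at h
      have hcancel : Q ^ m * (S.ncard : ℤ) = Q ^ m * (Q ^ m * Q + Q - 2) := by
        linear_combination -h
      have hval : (S.ncard : ℤ) = Q ^ m * Q + Q - 2 :=
        mul_left_cancel₀ (ne_of_gt hQm) hcancel
      have hval' : (S.ncard : ℤ) = ((q ^ (m + 1) + q - 2 : ℕ) : ℤ) := by
        rw [hcastsub, e5]; exact hval
      exact_mod_cast hval'
    · intro h
      rw [e3, e4]
      have hval : (S.ncard : ℤ) = Q ^ m * Q + Q - 2 := by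
        rw [h, hcastsub, e5]
      rw [hval]; ring
end

section
/- Let q ≥ 2 and n ≥ 1. The map sending a non-decreasing tuple (g₁,…,g_t) with 1 ≤ t ≤ q and Σgᵢ ≤ n+1 to the value Σᵢ(q^{gᵢ}−1)/(q−1), extended by sending 0 to 0, is injective. -/
lemma key_list (q : ℕ) (hq : 2 ≤ q) :
    ∀ (l l' : List ℕ), l.Pairwise (· ≥ ·) → l'.Pairwise (· ≥ ·) →
    (∀ x ∈ l, 1 ≤ x) → (∀ x ∈ l', 1 ≤ x) →
    l.length ≤ q → l'.length ≤ q →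
    (l.map fun x => q ^ x - 1).sum = (l'.map fun x => q ^ x - 1).sum → l = l' := by
  intro l
  induction l with
  | nil =>
    intro l' _ _ _ hpos' _ _ hsum
    cases l' with
    | nil => rfl
    | cons b t' =>
      exfalso
      simp only [List.map_nil, List.sum_nil, List.map_cons, List.sum_cons] at hsum
      have hb : 1 ≤ b := hpos' b (by simp)
      have : 1 ≤ q ^ b - 1 := by
        have : q ≤ q ^ b := Nat.le_self_pow (by omega) q
        omega
      omega
  | cons a t ih =>
    intro l' hs hs' hpos hpos' hlen hlen' hsum
    cases l' with
    | nil =>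
      exfalso
      simp only [List.map_nil, List.sum_nil, List.map_cons, List.sum_cons] at hsum
      have ha : 1 ≤ a := hpos a (by simp)
      have : q ≤ q ^ a := Nat.le_self_pow (by omega) q
      omega
    | cons b t' =>
      -- first show a = b
      have key : ∀ (x y : ℕ) (u u' : List ℕ), (x::u).Pairwise (· ≥ ·) →
          (x::u).length ≤ q → x < y →
          ((x::u).map fun z => q ^ z - 1).sum < ((y::u').map fun z => q ^ z - 1).sum := by
        intro x y u u' hsu hlu hxy
        have hbound : ∀ z ∈ (x::u).map fun z => q ^ z - 1, z ≤ q ^ x - 1 := by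
          intro z hz
          simp only [List.mem_map] at hz
          obtain ⟨w, hw, rfl⟩ := hz
          have hwx : w ≤ x := by
            rcases List.mem_cons.1 hw with rfl | hw
            · exact le_refl _
            · exact (List.pairwise_cons.1 hsu).1 w hw
          have := Nat.pow_le_pow_right (by omega : 1 ≤ q) hwx
          omega
        have h1 : ((x::u).map fun z => q ^ z - 1).sum ≤
            ((x::u).map fun z => q ^ z - 1).length • (q ^ x - 1) :=
          List.sum_le_card_nsmul _ _ hbound
        have hlen2 : ((x::u).map fun z => q ^ z - 1).length = (x::u).length := by simp
        have h2 : ((x::u).map fun z => q ^ z - 1).sum ≤ q * (q ^ x - 1) := by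
          rw [hlen2] at h1
          calc ((x::u).map fun z => q ^ z - 1).sum ≤ (x::u).length • (q ^ x - 1) := h1
            _ ≤ q * (q ^ x - 1) := by
                rw [smul_eq_mul]; exact Nat.mul_le_mul_right _ hlu
        have hpx : 1 ≤ q ^ x := Nat.one_le_pow _ _ (by omega)
        have hmul : q * (q ^ x - 1) + q = q * q ^ x := by
          rw [← Nat.mul_succ, Nat.succ_eq_add_one, Nat.sub_add_cancel hpx]
        have hstep : q * q ^ x ≤ q ^ y := by
          rw [← pow_succ']
          exact Nat.pow_le_pow_right (by omega) (by omega)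
        have h3 : q ^ y - 1 ≤ ((y::u').map fun z => q ^ z - 1).sum := by
          simp only [List.map_cons, List.sum_cons]; omega
        omega
      have hab : a = b := by
        by_contra hne
        rcases Nat.lt_or_ge a b with h | h
        · exact absurd hsum (Nat.ne_of_lt (key a b t t' hs hlen h))
        · have : b < a := by omega
          exact absurd hsum.symm (Nat.ne_of_lt (key b a t' t hs' hlen' this))
      subst hab
      have htail : (t.map fun x => q ^ x - 1).sum = (t'.map fun x => q ^ x - 1).sum := by
        simp only [List.map_cons, List.sum_cons] at hsum
        omega
      have := ih t' (List.pairwise_cons.1 hs).2 (List.pairwise_cons.1 hs').2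
        (fun x hx => hpos x (by simp [hx])) (fun x hx => hpos' x (by simp [hx]))
        (by simp at hlen ⊢; omega) (by simp at hlen' ⊢; omega) htail
      rw [this]

/-- The map sending a nondecreasing tuple `(g₁,…,g_t)` with `1 ≤ t ≤ q`, `1 ≤ gᵢ ≤ n+1`,
`Σ gᵢ ≤ n+1` to `Σᵢ (q^{gᵢ} - 1)/(q - 1)`, extended by `0 ↦ 0`, is injective: tuples take
nonzero values, and two tuples with the same value coincide. -/
theorem weight_spectrum_injective (q n : ℕ) (hq : 2 ≤ q) (hn : 1 ≤ n) :
    (∀ (t : ℕ) (g : Fin t → ℕ), 1 ≤ t → t ≤ q → Monotone g →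
      (∀ i, 1 ≤ g i ∧ g i ≤ n + 1) → (∑ i, g i ≤ n + 1) →
      0 < (∑ i, (q ^ g i - 1)) / (q - 1)) ∧
    (∀ (t t' : ℕ) (g : Fin t → ℕ) (g' : Fin t' → ℕ),
      1 ≤ t → t ≤ q → 1 ≤ t' → t' ≤ q →
      Monotone g → Monotone g' →
      (∀ i, 1 ≤ g i ∧ g i ≤ n + 1) → (∀ i, 1 ≤ g' i ∧ g' i ≤ n + 1) →
      (∑ i, g i ≤ n + 1) → (∑ i, g' i ≤ n + 1) →
      (∑ i, (q ^ g i - 1)) / (q - 1) = (∑ i, (q ^ g' i - 1)) / (q - 1) →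
      ∃ h : t = t', ∀ i : Fin t, g i = g' (Fin.cast h i)) := by
  have hdvd : ∀ (t : ℕ) (g : Fin t → ℕ), (q - 1) ∣ ∑ i, (q ^ g i - 1) := by
    intro t g
    refine Finset.dvd_sum fun i _ => ?_
    have := Nat.sub_dvd_pow_sub_pow q 1 (g i)
    simpa using this
  constructor
  · intro t g ht _ _ hpos _
    have i0 : Fin t := ⟨0, by omega⟩
    have h1 : q ^ g i0 - 1 ≤ ∑ i, (q ^ g i - 1) :=
      Finset.single_le_sum (f := fun i => q ^ g i - 1) (fun i _ => Nat.zero_le _) (Finset.mem_univ i0)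
    have h2 : q ≤ q ^ g i0 := Nat.le_self_pow (by have := (hpos i0).1; omega) q
    exact Nat.div_pos (by omega) (by omega)
  · intro t t' g g' ht htq ht' ht'q hm hm' hpos hpos' hsum hsum' heq
    have hsums : ∑ i, (q ^ g i - 1) = ∑ i, (q ^ g' i - 1) := by
      have e1 := Nat.div_mul_cancel (hdvd t g)
      have e2 := Nat.div_mul_cancel (hdvd t' g')
      rw [← e1, ← e2, heq]
    -- reversed lists
    have hsorted : ∀ (s : ℕ) (f : Fin s → ℕ), Monotone f →
        (List.ofFn f).reverse.Pairwise (· ≥ ·) := by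
      intro s f hf
      rw [List.pairwise_reverse]
      rw [List.pairwise_ofFn]
      intro i j hij
      exact hf hij.le
    have hmapsum : ∀ (s : ℕ) (f : Fin s → ℕ),
        (((List.ofFn f).reverse).map fun x => q ^ x - 1).sum = ∑ i, (q ^ f i - 1) := by
      intro s f
      rw [List.map_reverse, List.sum_reverse, List.map_ofFn, List.sum_ofFn]
      rfl
    have hkey := key_list q hq (List.ofFn g).reverse (List.ofFn g').reverse
      (hsorted t g hm) (hsorted t' g' hm')
      (by intro x hx; rw [List.mem_reverse, List.mem_ofFn] at hx
          obtain ⟨i, rfl⟩ := hx; exact (hpos i).1)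
      (by intro x hx; rw [List.mem_reverse, List.mem_ofFn] at hx
          obtain ⟨i, rfl⟩ := hx; exact (hpos' i).1)
      (by simpa using htq) (by simpa using ht'q)
      (by rw [hmapsum, hmapsum, hsums])
    have hlists : List.ofFn g = List.ofFn g' := List.reverse_injective hkey
    have hlen : t = t' := by
      have := congrArg List.length hlists
      simpa using this
    subst hlen
    refine ⟨rfl, fun i => ?_⟩
    have : g = g' := List.ofFn_injective hlists
    simp [this]
end
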